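/- arXiv:0801.0401 — 6 statements merged into one kernel-verified Lean document; each statement's English description precedes it below -/
import Mathlib

section
/- Let A be a left-noetherian ring satisfying Auslander's condition (AC), and let M be a finitely generated left A-module. If there exists an integer n such that Ext_A^i(M,M) = 0 for all i ≥ n, and if Ext_A^i(M,A) = 0 for all i ≥ 1, then M is a projective A-module. -/
open CategoryTheory

universe u

noncomputable abbrev ExtGroup {A : Type u} [Ring A] (M N : ModuleCat.{u} A) (i : ℕ) :=
  ((Ext ℤ (ModuleCat.{u} A) i).obj (Opposite.op M)).obj N

/-- Auslander's condition (AC). -/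
def SatisfiesAC (A : Type u) [Ring A] : Prop :=
  ∀ M : ModuleCat.{u} A, Module.Finite A M →
    ∃ b : ℕ, ∀ N : ModuleCat.{u} A, Module.Finite A N →
      (∃ n : ℕ, ∀ i ≥ n, Subsingleton (ExtGroup M N i)) →
      ∀ i > b, Subsingleton (ExtGroup M N i)

namespace StmtAux

set_option linter.unusedSectionVars false
set_option maxHeartbeats 1000000

open Limits

lemma subsingleton_iff_isZero {R : Type*} [Ring R] (X : ModuleCat R) :
    Subsingleton X ↔ IsZero X := by
  constructor
  · intro h; exact ModuleCat.isZero_of_subsingleton X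
  · intro h
    rw [IsZero.iff_id_eq_zero] at h
    exact ⟨fun a b => by
      have ha : ∀ x : X, x = 0 := fun x => by
        have := congrArg (fun (f : X ⟶ X) => f x) h
        simpa using this
      rw [ha a, ha b]⟩

section Cx

variable {A : Type u} [Ring A]
variable (F : ℕ → ModuleCat.{u} A) (d : ∀ j, F (j+1) ⟶ F j)

/-- The resolution complex built from the tail of `F` starting at `j`. -/
noncomputable def P (hdd : ∀ j, (d (j+1)) ≫ (d j) = 0) (j : ℕ) :
    ChainComplex (ModuleCat.{u} A) ℕ :=
  ChainComplex.of (fun i => F (j+i)) (fun i => d (j+i)) (fun i => hdd (j+i))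

/-- Exactness of the `Hom(F _, N)` complex at position `m+1`. -/
def Psi (m : ℕ) (N : ModuleCat.{u} A) : Prop :=
  ∀ f : F (m+1) ⟶ N, d (m+1) ≫ f = 0 → ∃ g : F m ⟶ N, f = d m ≫ g

variable (K : ℕ → ModuleCat.{u} A) (p : ∀ j, F j ⟶ K j)
  (hdd : ∀ j, (d (j+1)) ≫ (d j) = 0)
  (hpd : ∀ j, (d j) ≫ (p j) = 0)
  (hfree : ∀ j, Projective (F j))
  (hsurj : ∀ j, Function.Surjective (p j))
  (hex : ∀ j (x : F (j+1)), d j x = 0 → ∃ y, d (j+1) y = x)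
  (hex0 : ∀ j (x : F j), p j x = 0 → ∃ y, d j y = x)

/-- The tail complexes are projective resolutions of the syzygies. -/
noncomputable def Pres (j : ℕ) : ProjectiveResolution (K j) where
  complex := P F d hdd j
  projective n := hfree (j+n)
  π := (ChainComplex.toSingle₀Equiv _ _).symm ⟨p j, by
    show (P F d hdd j).d 1 0 ≫ p j = 0
    have e : (P F d hdd j).d 1 0 = d (j+0) := ChainComplex.of_d (fun i => F (j+i)) (fun i => d (j+i)) 0
    rw [e]; exact hpd (j+0)⟩
  quasiIso := ⟨fun n => by
    cases n with
    | zero =>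
      rw [ChainComplex.quasiIsoAt₀_iff, ShortComplex.quasiIso_iff_of_zeros']
      rotate_left
      · rfl
      · rfl
      · rfl
      constructor
      · rw [ShortComplex.moduleCat_exact_iff]
        have e : (P F d hdd j).d 1 0 = d (j+0) := ChainComplex.of_d (fun i => F (j+i)) (fun i => d (j+i)) 0
        intro x hx
        have hx' : p j x = 0 := by
          exact hx
        obtain ⟨y, hy⟩ := hex0 (j+0) x hx'
        exact ⟨y, (ConcreteCategory.congr_hom e y).trans hy⟩
      · apply (ModuleCat.epi_iff_surjective _).2
        dsimp [HomologicalComplex.shortComplexFunctor', ChainComplex.toSingle₀Equiv]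
        exact hsurj (j+0)
    | succ n =>
      rw [quasiIsoAt_iff_exactAt']
      swap
      · apply ChainComplex.exactAt_succ_single_obj
      rw [HomologicalComplex.exactAt_iff' _ (n+2) (n+1) n (by simp) (by simp)]
      rw [ShortComplex.moduleCat_exact_iff]
      have e : (P F d hdd j).d (n+1) n = d (j+n) := ChainComplex.of_d (fun i => F (j+i)) (fun i => d (j+i)) n
      have e2 : (P F d hdd j).d (n+2) (n+1) = d (j+(n+1)) := ChainComplex.of_d (fun i => F (j+i)) (fun i => d (j+i)) (n+1)
      intro x hx
      have hx' : d (j+n) ((x : F (j+(n+1)))) = 0 :=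
        (ConcreteCategory.congr_hom e x).symm.trans hx
      obtain ⟨y, hy⟩ := hex (j+n) x hx'
      exact ⟨y, (ConcreteCategory.congr_hom e2 y).trans hy⟩⟩

/-- Translation: vanishing of `Ext^{i+1}(K j, N)` is exactness of the Hom complex. -/
lemma trans0 (j i : ℕ) (N : ModuleCat.{u} A) (Q : ProjectiveResolution (K j))
    (hQ : Q.complex = P F d hdd j) :
    Subsingleton (ExtGroup (K j) N (i+1)) ↔ Psi F d (j+i) N := by
  rw [subsingleton_iff_isZero]
  have iso1 := Q.isoExt (i+1) N (R := ℤ)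
  rw [iso1.isZero_iff]
  rw [hQ]
  rw [← HomologicalComplex.exactAt_iff_isZero_homology]
  rw [HomologicalComplex.exactAt_iff' _ i (i+1) (i+2)
    (CochainComplex.prev_nat_succ i) (by simp)]
  rw [ShortComplex.moduleCat_exact_iff]
  have e1 : (P F d hdd j).d (i+1) i = d (j+i) := ChainComplex.of_d (fun i => F (j+i)) (fun i => d (j+i)) i
  have e2 : (P F d hdd j).d (i+2) (i+1) = d (j+(i+1)) := ChainComplex.of_d (fun i => F (j+i)) (fun i => d (j+i)) (i+1)
  constructor
  · intro h f hf
    obtain ⟨g, hg⟩ := h f (by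
      show Linear.leftComp ℤ N ((P F d hdd j).d (i+2) (i+1)) f = 0
      rw [e2]; exact hf)
    refine ⟨g, ?_⟩
    have hg' : Linear.leftComp ℤ N ((P F d hdd j).d (i+1) i) g = f := hg
    rw [e1] at hg'
    exact hg'.symm
  · intro h f hf
    have hf' : d ((j+i)+1) ≫ (f : F (j+(i+1)) ⟶ N) = 0 := by
      have h0 : Linear.leftComp ℤ N ((P F d hdd j).d (i+2) (i+1)) f = 0 := hf
      rwa [e2] at h0
    obtain ⟨g, hg⟩ := h f hf'
    refine ⟨g, ?_⟩
    show Linear.leftComp ℤ N ((P F d hdd j).d (i+1) i) g = f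
    rw [e1]
    exact hg.symm

/-- `Psi` passes to finite products. -/
lemma Psi_pi (m : ℕ) (s : ℕ) (h : Psi F d m (ModuleCat.of A A)) :
    Psi F d m (ModuleCat.of A (Fin s → A)) := by
  intro f hf
  have hcomp : ∀ i : Fin s, ∃ g : F m ⟶ ModuleCat.of A A,
      ModuleCat.ofHom ((LinearMap.proj (R := A) (φ := fun _ : Fin s => A) i).comp f.hom) = d m ≫ g := by
    intro i
    apply h (ModuleCat.ofHom ((LinearMap.proj (R := A) (φ := fun _ : Fin s => A) i).comp f.hom))
    apply ModuleCat.hom_ext; apply LinearMap.ext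
    intro x
    have h0 : f (d (m+1) x) = 0 := ConcreteCategory.congr_hom hf x
    show (LinearMap.proj (R := A) (φ := fun _ : Fin s => A) i) (f (d (m+1) x)) = 0
    rw [h0]
    rfl
  choose g hg using hcomp
  refine ⟨ModuleCat.ofHom (LinearMap.pi fun i => (g i).hom), ?_⟩
  apply ModuleCat.hom_ext; apply LinearMap.ext
  intro x
  funext i
  exact ConcreteCategory.congr_hom (hg i) x

/-- `Psi` passes to retracts. -/
lemma Psi_retract (m : ℕ) {N N' : ModuleCat.{u} A} (e : N' ⟶ N) (r : N ⟶ N')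
    (hre : e ≫ r = 𝟙 N') (h : Psi F d m N) : Psi F d m N' := by
  intro f hf
  obtain ⟨g, hg⟩ := h (f ≫ e) (by rw [← Category.assoc, hf, Limits.zero_comp])
  refine ⟨g ≫ r, ?_⟩
  have : f ≫ e ≫ r = (d m ≫ g) ≫ r := by rw [← Category.assoc, ← hg, Category.assoc]
  simpa [hre, Category.assoc] using this

end Cx

section Concrete

variable {A : Type u} [Ring A] [IsNoetherianRing A]
  (M : ModuleCat.{u} A) (hM : Module.Finite A M)

/-- number of generators chosen for a finite module -/
noncomputable def nn (N : ModuleCat.{u} A) (h : Module.Finite A N) : ℕ :=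
  (Module.Finite.exists_fin' A N).choose

noncomputable def pp (N : ModuleCat.{u} A) (h : Module.Finite A N) :
    (Fin (nn N h) → A) →ₗ[A] N :=
  (Module.Finite.exists_fin' A N).choose_spec.choose

lemma pp_surj (N : ModuleCat.{u} A) (h : Module.Finite A N) :
    Function.Surjective (pp N h) :=
  (Module.Finite.exists_fin' A N).choose_spec.choose_spec

lemma fin_ker {s : ℕ} (N : ModuleCat.{u} A) (f : (Fin s → A) →ₗ[A] N) :
    Module.Finite A (LinearMap.ker f) := by
  have : IsNoetherian A (Fin s → A) := inferInstance
  exact Module.Finite.iff_fg.mpr (IsNoetherian.noetherian _)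

/-- iterated syzygies, with finiteness -/
noncomputable def KK : ℕ → Σ' (N : ModuleCat.{u} A), Module.Finite A N
  | 0 => ⟨M, hM⟩
  | j+1 => ⟨ModuleCat.of A (LinearMap.ker (pp (KK j).1 (KK j).2)), fin_ker _ _⟩

noncomputable abbrev syzK (j : ℕ) : ModuleCat.{u} A := (KK M hM j).1
lemma syzK_fin (j : ℕ) : Module.Finite A (syzK M hM j) := (KK M hM j).2

noncomputable abbrev nF (j : ℕ) : ℕ := nn (syzK M hM j) (syzK_fin M hM j)
noncomputable abbrev freeF (j : ℕ) : ModuleCat.{u} A := ModuleCat.of A (Fin (nF M hM j) → A)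

noncomputable def mapp (j : ℕ) : freeF M hM j ⟶ syzK M hM j :=
  ModuleCat.ofHom (pp (syzK M hM j) (syzK_fin M hM j))

lemma mapp_surj (j : ℕ) : Function.Surjective (mapp M hM j) := pp_surj _ _

noncomputable def mapi (j : ℕ) : syzK M hM (j+1) ⟶ freeF M hM j :=
  ModuleCat.ofHom (LinearMap.ker (mapp M hM j).hom).subtype

lemma mapi_inj (j : ℕ) : Function.Injective (mapi M hM j) := Subtype.val_injective

lemma mapi_p (j : ℕ) : mapi M hM j ≫ mapp M hM j = 0 := by
  apply ModuleCat.hom_ext; apply LinearMap.ext; intro x; exact x.2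

noncomputable def mapd (j : ℕ) : freeF M hM (j+1) ⟶ freeF M hM j :=
  mapp M hM (j+1) ≫ mapi M hM j

lemma mapd_apply (j : ℕ) (x : freeF M hM (j+1)) :
    mapd M hM j x = mapi M hM j (mapp M hM (j+1) x) := rfl

lemma mapd_p (j : ℕ) : mapd M hM j ≫ mapp M hM j = 0 := by
  rw [mapd, Category.assoc, mapi_p, Limits.comp_zero]

lemma mapd_d (j : ℕ) : mapd M hM (j+1) ≫ mapd M hM j = 0 := by
  apply ModuleCat.hom_ext; apply LinearMap.ext; intro x
  show mapi M hM j (mapp M hM (j+1) (mapi M hM (j+1) (mapp M hM (j+2) x))) = 0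
  have h0 : mapp M hM (j+1) (mapi M hM (j+1) (mapp M hM (j+2) x)) = 0 :=
    (mapp M hM (j+2) x).2
  rw [h0, map_zero]

lemma mapd_exact (j : ℕ) (x : freeF M hM (j+1)) (hx : mapd M hM j x = 0) :
    ∃ y, mapd M hM (j+1) y = x := by
  have hk : mapp M hM (j+1) x = 0 := by
    apply mapi_inj M hM j
    rw [map_zero, ← mapd_apply]; exact hx
  obtain ⟨y, hy⟩ := mapp_surj M hM (j+2) ⟨x, LinearMap.mem_ker.mpr hk⟩
  refine ⟨y, ?_⟩
  rw [mapd_apply, hy]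
  rfl

lemma mapd_exact0 (j : ℕ) (x : freeF M hM j) (hx : mapp M hM j x = 0) :
    ∃ y, mapd M hM j y = x := by
  obtain ⟨y, hy⟩ := mapp_surj M hM (j+1) ⟨x, LinearMap.mem_ker.mpr hx⟩
  refine ⟨y, ?_⟩
  rw [mapd_apply, hy]
  rfl

lemma freeF_projective (j : ℕ) : Projective (freeF M hM j) :=
  ModuleCat.projective_of_free (Pi.basisFun A (Fin (nF M hM j)))

/-- the chosen projective resolution of the `j`-th syzygy -/
noncomputable def PresC (j : ℕ) : ProjectiveResolution (syzK M hM j) :=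
  Pres (freeF M hM) (mapd M hM) (syzK M hM) (mapp M hM) (mapd_d M hM) (mapd_p M hM)
    (freeF_projective M hM) (mapp_surj M hM) (mapd_exact M hM) (mapd_exact0 M hM) j

lemma transC (j i : ℕ) (N : ModuleCat.{u} A) :
    Subsingleton (ExtGroup (syzK M hM j) N (i+1)) ↔
      Psi (freeF M hM) (mapd M hM) (j+i) N :=
  trans0 (freeF M hM) (mapd M hM) (syzK M hM) (mapd_d M hM) j i N (PresC M hM j) rfl

/-- dimension shifting in the second variable, concretely -/
lemma Psi_step (m j : ℕ)
    (hK : Psi (freeF M hM) (mapd M hM) m (syzK M hM j))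
    (hF : Psi (freeF M hM) (mapd M hM) (m+1) (freeF M hM j)) :
    Psi (freeF M hM) (mapd M hM) (m+1) (syzK M hM (j+1)) := by
  intro f hf
  obtain ⟨g, hg⟩ := hF (f ≫ mapi M hM j) (by rw [← Category.assoc, hf, Limits.zero_comp])
  obtain ⟨h, hh⟩ := hK (g ≫ mapp M hM j) (by
    rw [← Category.assoc, ← hg, Category.assoc, mapi_p, Limits.comp_zero])
  haveI : Projective (freeF M hM m) := freeF_projective M hM m
  haveI : Epi (mapp M hM j) := (ModuleCat.epi_iff_surjective _).2 (mapp_surj M hM j)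
  set h' := Projective.factorThru h (mapp M hM j) with hh'
  have hfact : h' ≫ mapp M hM j = h := Projective.factorThru_comp _ _
  set g' : freeF M hM (m+1) ⟶ freeF M hM j := g - (mapd M hM m ≫ h') with hg'
  have hpg' : g' ≫ mapp M hM j = 0 := by
    rw [hg', Preadditive.sub_comp, Category.assoc, hfact, ← hh, sub_self]
  set g'' : freeF M hM (m+1) ⟶ syzK M hM (j+1) :=
    ModuleCat.ofHom (LinearMap.codRestrict (LinearMap.ker (mapp M hM j).hom) g'.hom
      (fun x => by exact ConcreteCategory.congr_hom hpg' x)) with hg''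
  refine ⟨g'', ?_⟩
  apply ModuleCat.hom_ext; apply LinearMap.ext
  intro x
  apply mapi_inj M hM j
  show mapi M hM j (f x) = mapi M hM j (g'' (mapd M hM (m+1) x))
  have e1 : mapi M hM j (g'' (mapd M hM (m+1) x)) = g' (mapd M hM (m+1) x) := rfl
  rw [e1, hg']
  have e2 : (g - mapd M hM m ≫ h') (mapd M hM (m+1) x)
      = g (mapd M hM (m+1) x) - h' (mapd M hM m (mapd M hM (m+1) x)) := rfl
  rw [e2]
  have e3 : mapd M hM m (mapd M hM (m+1) x) = 0 := ConcreteCategory.congr_hom (mapd_d M hM m) x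
  rw [e3, map_zero, sub_zero]
  exact ConcreteCategory.congr_hom hg x

/-- splitting: `Psi j (syzK (j+1))` makes `syzK j` projective -/
lemma Psi_split (j : ℕ)
    (h : Psi (freeF M hM) (mapd M hM) j (syzK M hM (j+1))) :
    Module.Projective A (syzK M hM j) := by
  obtain ⟨g, hg⟩ := h (mapp M hM (j+1)) (mapd_p M hM (j+1))
  -- g : freeF j ⟶ syzK (j+1), with  mapp (j+1) = mapd j ≫ g
  have hret : ∀ y : syzK M hM (j+1), g (mapi M hM j y) = y := by
    intro y
    obtain ⟨z, hz⟩ := mapp_surj M hM (j+1) y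
    have := ConcreteCategory.congr_hom hg z
    rw [← hz]
    exact this.symm
  set s : freeF M hM j →ₗ[A] freeF M hM j :=
    LinearMap.id - (mapi M hM j).hom.comp g.hom with hs
  have hker : LinearMap.ker (mapp M hM j).hom ≤ LinearMap.ker s := by
    intro x hx
    have : x = mapi M hM j ⟨x, hx⟩ := rfl
    simp only [LinearMap.mem_ker, hs, LinearMap.sub_apply, LinearMap.id_apply,
      LinearMap.comp_apply]
    rw [this, hret ⟨x, hx⟩]
    exact sub_self _
  set e := LinearMap.quotKerEquivOfSurjective
    (mapp M hM j).hom (mapp_surj M hM j) with he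
  set σ : syzK M hM j →ₗ[A] freeF M hM j :=
    (Submodule.liftQ (LinearMap.ker (mapp M hM j).hom) s hker).comp (e.symm : _ →ₗ[A] _) with hσ
  have hsec : (mapp M hM j).hom.comp σ = LinearMap.id := by
    apply LinearMap.ext
    intro y
    obtain ⟨x, hx⟩ := mapp_surj M hM j y
    have hq : e.symm y = Submodule.Quotient.mk x := by
      apply e.injective
      rw [LinearEquiv.apply_symm_apply]
      rw [← hx]
      rfl
    show mapp M hM j (σ y) = y
    rw [hσ]
    simp only [LinearMap.comp_apply, LinearEquiv.coe_coe]
    rw [hq]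
    have : (Submodule.liftQ (LinearMap.ker (mapp M hM j).hom) s hker)
        (Submodule.Quotient.mk x) = s x := rfl
    rw [this, hs]
    simp only [LinearMap.sub_apply, LinearMap.id_apply, LinearMap.comp_apply, map_sub]
    have h0 : mapp M hM j (mapi M hM j (g x)) = 0 := (g x).2
    rw [h0, sub_zero, hx]
  haveI : Module.Projective A (freeF M hM j) :=
    Module.Projective.of_basis (Pi.basisFun A (Fin (nF M hM j)))
  exact Module.Projective.of_split σ
    (mapp M hM j).hom hsec

/-- downward transfer: projectivity of a syzygy gives the splitting statement -/
lemma Psi_down (j : ℕ)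
    (hproj : Module.Projective A (syzK M hM (j+1)))
    (hF : Psi (freeF M hM) (mapd M hM) j (freeF M hM (j+1))) :
    Psi (freeF M hM) (mapd M hM) j (syzK M hM (j+1)) := by
  obtain ⟨σ, hσ⟩ := Module.projective_lifting_property
    (mapp M hM (j+1)).hom
    (LinearMap.id (R := A) (M := syzK M hM (j+1))) (mapp_surj M hM (j+1))
  exact Psi_retract _ _ j (ModuleCat.ofHom σ) (mapp M hM (j+1))
    (by apply ModuleCat.hom_ext; apply LinearMap.ext; intro x; exact DFunLike.congr_fun hσ x) hF

end Concrete

end StmtAux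

open StmtAux

theorem stmt0 (A : Type u) [Ring A] [IsNoetherianRing A]
    (hAC : SatisfiesAC A) (M : ModuleCat.{u} A) (_ : Module.Finite A M)
    (h1 : ∃ n : ℕ, ∀ i ≥ n, Subsingleton (ExtGroup M M i))
    (h2 : ∀ i ≥ 1, Subsingleton (ExtGroup M (ModuleCat.of A A) i)) :
    Module.Projective A M := by
  classical
  have hM : Module.Finite A M := ‹_›
  obtain ⟨n0, hn0⟩ := h1
  have hΨA : ∀ m, Psi (freeF M hM) (mapd M hM) m (ModuleCat.of A A) := by
    intro m
    have h := (transC M hM 0 m (ModuleCat.of A A)).mp (h2 (m+1) (by omega))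
    rwa [Nat.zero_add] at h
  have hΨF : ∀ m s, Psi (freeF M hM) (mapd M hM) m (ModuleCat.of A (Fin s → A)) :=
    fun m s => Psi_pi _ _ m s (hΨA m)
  have hev : ∀ k m, n0 + k ≤ m → Psi (freeF M hM) (mapd M hM) m (syzK M hM k) := by
    intro k
    induction k with
    | zero =>
      intro m hm
      have h := (transC M hM 0 m (syzK M hM 0)).mp (hn0 (m+1) (by omega))
      rwa [Nat.zero_add] at h
    | succ k ih =>
      intro m hm
      obtain ⟨m', rfl⟩ : ∃ m', m = m'+1 := ⟨m-1, by omega⟩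
      exact Psi_step M hM m' k (ih m' (by omega)) (hΨF (m'+1) _)
  have hevE : ∀ k, ∃ n, ∀ i ≥ n, Subsingleton (ExtGroup M (syzK M hM k) i) := by
    intro k
    refine ⟨n0+k+1, fun i hi => ?_⟩
    obtain ⟨m, rfl⟩ : ∃ m, i = m+1 := ⟨i-1, by omega⟩
    refine (transC M hM 0 m _).mpr ?_
    rw [Nat.zero_add]
    exact hev k m (by omega)
  obtain ⟨b, hb⟩ := hAC M hM
  have hsub : Subsingleton (ExtGroup M (syzK M hM (b+1)) (b+1)) :=
    hb _ (syzK_fin M hM (b+1)) (hevE (b+1)) (b+1) (by omega)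
  have hΨb : Psi (freeF M hM) (mapd M hM) b (syzK M hM (b+1)) := by
    have h := (transC M hM 0 b _).mp hsub
    rwa [Nat.zero_add] at h
  have hKb : Module.Projective A (syzK M hM b) := Psi_split M hM b hΨb
  have down : ∀ j, Module.Projective A (syzK M hM j) → Module.Projective A (syzK M hM 0) := by
    intro j
    induction j with
    | zero => exact id
    | succ k ih =>
      intro h
      exact ih (Psi_split M hM k (Psi_down M hM k h (hΨF k _)))
  exact down b hKb
end

section
/- Let A be a left-noetherian ring satisfying Auslander's condition (AC). Let U be a ℤ-indexed chain complex of left A-modules that is exact (acyclic), and let C be a finitely generated left A-module. Assume: (a) there exists an integer t such that the module U_v is finitely generated for all v ≥ t; (b) Ext_A^i(C, U_v) = 0 for all i ≥ 1 and all v ∈ ℤ; (c) there exists an integer w and an integer n such that Ext_A^i(C, Z_w(U)) = 0 for all i ≥ n, where Z_v(U) denotes the kernel of the differential ∂_v : U_v → U_{v-1}. Then Ext_A^i(C, Z_v(U)) = 0 for all i ≥ 1 and all v ∈ ℤ; in particular, the complex Hom_A(C, U) is exact. -/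
open CategoryTheory Limits

universe u

/-- The module of `v`-cycles `Z_v(U) = ker (∂_v : U_v → U_{v-1})` of a ℤ-indexed
chain complex of `A`-modules. -/
noncomputable abbrev cycles' {A : Type u} [Ring A] (U : ChainComplex (ModuleCat.{u} A) ℤ)
    (v : ℤ) : ModuleCat.{u} A :=
  ModuleCat.of A (LinearMap.ker (U.d v (v - 1)).hom)

namespace StmtAux

variable {A : Type u} [Ring A]

/-- Coboundary property: every `(m+1)`-cocycle of `Hom(P, Y)` is a coboundary,
i.e. `Ext^{m+1}(C, Y) = 0`. -/
def Van {C : ModuleCat.{u} A} (P : ProjectiveResolution C) (Y : ModuleCat.{u} A) (m : ℕ) : Prop :=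
  ∀ φ : P.complex.X (m+1) ⟶ Y, P.complex.d (m+2) (m+1) ≫ φ = 0 →
    ∃ ψ : P.complex.X m ⟶ Y, P.complex.d (m+1) m ≫ ψ = φ

lemma subsingleton_iff_isZero_s1 (X : ModuleCat.{u} ℤ) : Subsingleton X ↔ Limits.IsZero X := by
  constructor
  · intro h; exact ModuleCat.isZero_of_subsingleton _
  · intro h
    refine ⟨fun a b => ?_⟩
    have h0 : (𝟙 X) = 0 := by rwa [← Limits.IsZero.iff_id_eq_zero]
    have h1 : ∀ x : X, (𝟙 X) x = (0 : X ⟶ X) x := fun x => by rw [h0]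
    simpa using (h1 a).trans (h1 b).symm

lemma ext_subsingleton_iff_van {C : ModuleCat.{u} A} (P : ProjectiveResolution C)
    (Y : ModuleCat.{u} A) (m : ℕ) :
    Subsingleton (ExtGroup C Y (m+1)) ↔ Van P Y m := by
  have e := ((forget (ModuleCat ℤ)).mapIso (P.isoExt (R := ℤ) (m+1) Y)).toEquiv
  rw [show (Subsingleton (ExtGroup C Y (m+1)) ↔ _) from e.subsingleton_congr]
  rw [show Subsingleton ((forget (ModuleCat ℤ)).obj
      (HomologicalComplex.homology (P.complex.linearYonedaObj ℤ Y) (m + 1))) ↔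
      Subsingleton ((P.complex.linearYonedaObj ℤ Y).homology (m+1)) from Iff.rfl,
    subsingleton_iff_isZero_s1, ← HomologicalComplex.exactAt_iff_isZero_homology,
    HomologicalComplex.exactAt_iff' _ m (m+1) (m+2) (by simp) (by simp),
    ShortComplex.moduleCat_exact_iff]
  constructor
  · intro h φ hφ
    obtain ⟨ψ, hψ⟩ := h φ hφ
    exact ⟨ψ, hψ⟩
  · intro h φ hφ
    obtain ⟨ψ, hψ⟩ := h φ hφ
    exact ⟨ψ, hψ⟩

section chase

variable {C : ModuleCat.{u} A} (P : ProjectiveResolution C)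
  {Y1 Y2 Y3 : ModuleCat.{u} A} (ι : Y1 ⟶ Y2) (p : Y2 ⟶ Y3)
  (hιp : ι ≫ p = 0) [Mono ι] [Epi p]
  (hlift : ∀ ⦃W : ModuleCat.{u} A⦄ (f : W ⟶ Y2), f ≫ p = 0 → ∃ g : W ⟶ Y1, g ≫ ι = f)

include hιp hlift

lemma chase1 (m : ℕ) (h2 : Van P Y2 m) (h1 : Van P Y1 (m+1)) : Van P Y3 m := by
  intro φ hφ
  set ψ := Projective.factorThru φ p with hψdef
  have hψ : ψ ≫ p = φ := Projective.factorThru_comp φ p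
  obtain ⟨α, hα⟩ := hlift (P.complex.d (m+2) (m+1) ≫ ψ)
    (by rw [Category.assoc, hψ, hφ])
  have hαcoc : P.complex.d (m+3) (m+2) ≫ α = 0 := by
    rw [← cancel_mono ι, Category.assoc, hα, ← Category.assoc,
      HomologicalComplex.d_comp_d, zero_comp, zero_comp]
  obtain ⟨β, hβ⟩ := h1 α hαcoc
  obtain ⟨γ, hγ⟩ := h2 (ψ - β ≫ ι) (by
    rw [Preadditive.comp_sub, ← Category.assoc, hβ, hα, sub_self])
  refine ⟨γ ≫ p, ?_⟩
  rw [← Category.assoc, hγ, Preadditive.sub_comp, hψ, Category.assoc, hιp, comp_zero, sub_zero]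

lemma chase2 (m : ℕ) (h2 : Van P Y2 (m+1)) (h3 : Van P Y3 m) : Van P Y1 (m+1) := by
  intro α hα
  obtain ⟨ψ, hψ⟩ := h2 (α ≫ ι) (by rw [← Category.assoc, hα, zero_comp])
  obtain ⟨θ, hθ⟩ := h3 (ψ ≫ p) (by
    rw [← Category.assoc, hψ, Category.assoc, hιp, comp_zero])
  set θ' := Projective.factorThru θ p with hθ'def
  have hθ' : θ' ≫ p = θ := Projective.factorThru_comp θ p
  obtain ⟨β, hβ⟩ := hlift (ψ - P.complex.d (m+1) m ≫ θ') (by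
    rw [Preadditive.sub_comp, Category.assoc, hθ', hθ, sub_self])
  refine ⟨β, ?_⟩
  rw [← cancel_mono ι, Category.assoc, hβ, Preadditive.comp_sub, hψ, ← Category.assoc,
    HomologicalComplex.d_comp_d, zero_comp, sub_zero]

lemma chase0 (h1 : Van P Y1 0) (f : C ⟶ Y3) : ∃ h : C ⟶ Y2, h ≫ p = f := by
  set ψ := Projective.factorThru (P.π.f 0 ≫ f) p with hψdef
  have hψ : ψ ≫ p = P.π.f 0 ≫ f := Projective.factorThru_comp _ p
  obtain ⟨α, hα⟩ := hlift (P.complex.d 1 0 ≫ ψ) (by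
    rw [Category.assoc, hψ]; exact (P.complex_d_comp_π_f_zero_assoc f).trans zero_comp)
  have hαcoc : P.complex.d 2 1 ≫ α = 0 := by
    rw [← cancel_mono ι, Category.assoc, hα, ← Category.assoc,
      HomologicalComplex.d_comp_d, zero_comp, zero_comp]
  obtain ⟨β, hβ⟩ := h1 α hαcoc
  have hcob : P.complex.d 1 0 ≫ (ψ - β ≫ ι) = 0 := by
    rw [Preadditive.comp_sub, ← Category.assoc, hβ, hα, sub_self]
  refine ⟨P.exact₀.desc (ψ - β ≫ ι) hcob, ?_⟩
  refine (cancel_epi (P.π.f 0)).mp ?_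
  exact (Category.assoc _ _ _).symm.trans (by rw [P.exact₀.g_desc,
    Preadditive.sub_comp, hψ, Category.assoc, hιp, comp_zero, sub_zero])

end chase

section ses

variable (U : ChainComplex (ModuleCat.{u} A) ℤ)

noncomputable def ic (v : ℤ) : cycles' U v ⟶ U.X v :=
  ModuleCat.ofHom (LinearMap.ker (U.d v (v-1)).hom).subtype

noncomputable def pc (v : ℤ) : U.X v ⟶ cycles' U (v-1) :=
  ModuleCat.ofHom <| LinearMap.codRestrict (LinearMap.ker (U.d (v-1) (v-1-1)).hom) (U.d v (v-1)).hom (fun x => by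
    rw [LinearMap.mem_ker]
    have h := U.d_comp_d v (v-1) (v-1-1)
    calc (U.d (v-1) (v-1-1)).hom ((U.d v (v-1)).hom x) = (U.d v (v-1) ≫ U.d (v-1) (v-1-1)).hom x := rfl
      _ = 0 := by rw [h]; rfl)

lemma ic_pc (v : ℤ) : ic U v ≫ pc U v = 0 := by
  apply ModuleCat.hom_ext
  apply LinearMap.ext
  intro x
  apply Subtype.ext
  exact x.2

instance (v : ℤ) : Mono (ic U v) :=
  (ModuleCat.mono_iff_injective _).mpr (Submodule.injective_subtype (LinearMap.ker (U.d v (v-1)).hom))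

lemma pc_surjective (v : ℤ) (hU : U.ExactAt (v-1)) :
    Function.Surjective (pc U v) := by
  rw [HomologicalComplex.exactAt_iff' _ v (v-1) (v-1-1) (by simp) (by simp)] at hU
  rw [ShortComplex.moduleCat_exact_iff] at hU
  intro z
  obtain ⟨x, hx⟩ := hU (Subtype.val z) (Subtype.property z)
  exact ⟨x, Subtype.ext hx⟩

lemma pc_lift (v : ℤ) ⦃W : ModuleCat.{u} A⦄ (f : W ⟶ U.X v)
    (hf : f ≫ pc U v = 0) : ∃ g : W ⟶ cycles' U v, g ≫ ic U v = f := by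
  refine ⟨ModuleCat.ofHom (LinearMap.codRestrict _ f.hom (fun x => ?_)), rfl⟩
  rw [LinearMap.mem_ker]
  have h2 : (pc U v).hom (f.hom x) = 0 := congrArg (fun g => g.hom x) hf
  exact congrArg Subtype.val h2

end ses

end StmtAux

open StmtAux in
theorem stmt1 (A : Type u) [Ring A] [IsNoetherianRing A] (hAC : SatisfiesAC A)
    (U : ChainComplex (ModuleCat.{u} A) ℤ) (hU : ∀ v : ℤ, U.ExactAt v)
    (C : ModuleCat.{u} A) (hC : Module.Finite A C)
    (ha : ∃ t : ℤ, ∀ v ≥ t, Module.Finite A (U.X v))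
    (hb : ∀ (i : ℕ), 1 ≤ i → ∀ v : ℤ, Subsingleton (ExtGroup C (U.X v) i))
    (hc : ∃ w : ℤ, ∃ n : ℕ, ∀ i ≥ n, Subsingleton (ExtGroup C (cycles' U w) i)) :
    (∀ (i : ℕ), 1 ≤ i → ∀ v : ℤ, Subsingleton (ExtGroup C (cycles' U v) i)) ∧
    (∀ v : ℤ, Function.Exact
      (fun f : C ⟶ U.X (v + 1) => f ≫ U.d (v + 1) v)
      (fun f : C ⟶ U.X v => f ≫ U.d v (v - 1))) := by
  obtain ⟨t, hat⟩ := ha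
  obtain ⟨w, n, hwn⟩ := hc
  obtain ⟨P⟩ : Nonempty (ProjectiveResolution C) := ⟨ProjectiveResolution.of C⟩
  haveI hepi : ∀ v : ℤ, Epi (pc U v) :=
    fun v => (ModuleCat.epi_iff_surjective _).mpr (pc_surjective U v (hU (v-1)))
  -- `Ext^{m+1}(C, U.X v) = 0` in coboundary form
  have hbv : ∀ (v : ℤ) (m : ℕ), Van P (U.X v) m :=
    fun v m => (ext_subsingleton_iff_van P _ m).mp (hb (m+1) (by omega) v)
  -- dimension shifting
  have shift : ∀ (v : ℤ) (m : ℕ),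
      Van P (cycles' U (v-1)) m ↔ Van P (cycles' U v) (m+1) := by
    intro v m
    constructor
    · intro h3
      exact chase2 P (ic U v) (pc U v) (ic_pc U v) (pc_lift U v) m (hbv v (m+1)) h3
    · intro h1
      exact chase1 P (ic U v) (pc U v) (ic_pc U v) (pc_lift U v) m (hbv v m) h1
  have iter : ∀ (k : ℕ) (v : ℤ) (m : ℕ),
      Van P (cycles' U v) m ↔ Van P (cycles' U (v + (k:ℤ))) (m + k) := by
    intro k
    induction k with
    | zero => intro v m; simp
    | succ k ih =>
      intro v m
      refine (ih v m).trans ?_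
      have h := shift (v + (k:ℤ) + 1) (m+k)
      rw [add_sub_cancel_right] at h
      have e : v + ((k+1 : ℕ) : ℤ) = v + (k:ℤ) + 1 := by push_cast; ring
      rw [e]
      exact h
  -- vanishing at `w` in coboundary form
  have hwvan : ∀ m : ℕ, n ≤ m + 1 → Van P (cycles' U w) m :=
    fun m hm => (ext_subsingleton_iff_van P _ m).mp (hwn (m+1) hm)
  -- eventual vanishing for every `v`
  have ev : ∀ (v : ℤ) (m : ℕ), n + (w - v).natAbs ≤ m → Van P (cycles' U v) m := by
    intro v m hm
    by_cases hvw : w ≤ v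
    · set k := (v - w).natAbs with hkdef
      have hk : v = w + (k:ℤ) := by omega
      have h1 : Van P (cycles' U w) (m - k) := hwvan (m-k) (by omega)
      have h2 := (iter k w (m-k)).mp h1
      rw [← hk] at h2
      have e : m - k + k = m := by omega
      rwa [e] at h2
    · set k := (w - v).natAbs with hkdef
      have hk : w = v + (k:ℤ) := by omega
      refine (iter k v m).mpr ?_
      rw [← hk]
      exact hwvan (m+k) (by omega)
  -- Auslander's condition gives a uniform bound for finitely generated cycles
  obtain ⟨b, hball⟩ := hAC C hC
  have acvan : ∀ v : ℤ, t ≤ v → ∀ m : ℕ, b ≤ m → Van P (cycles' U v) m := by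
    intro v hv m hm
    haveI := hat v hv
    haveI : IsNoetherian A (U.X v) := isNoetherian_of_isNoetherianRing_of_finite A (U.X v)
    have hfin : Module.Finite A (cycles' U v) :=
      Module.Finite.iff_fg.mpr (IsNoetherian.noetherian (LinearMap.ker (U.d v (v-1)).hom))
    have hev : ∃ n0 : ℕ, ∀ i ≥ n0, Subsingleton (ExtGroup C (cycles' U v) i) := by
      refine ⟨n + (w-v).natAbs + 1, fun i hi => ?_⟩
      obtain ⟨m', rfl⟩ : ∃ m', i = m' + 1 := ⟨i - 1, by omega⟩
      exact (ext_subsingleton_iff_van P _ m').mpr (ev v m' (by omega))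
    have hss := hball (cycles' U v) hfin hev (m+1) (by omega)
    exact (ext_subsingleton_iff_van P _ m).mp hss
  -- first conclusion
  have final1 : ∀ (i : ℕ), 1 ≤ i → ∀ v : ℤ, Subsingleton (ExtGroup C (cycles' U v) i) := by
    intro i hi v
    obtain ⟨m, rfl⟩ : ∃ m, i = m + 1 := ⟨i - 1, by omega⟩
    refine (ext_subsingleton_iff_van P _ m).mpr ?_
    set k := (t - v).natAbs + b with hkdef
    refine (iter k v m).mpr (acvan (v + (k:ℤ)) (by omega) (m + k) (by omega))
  refine ⟨final1, ?_⟩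
  -- key lifting lemma for the second conclusion
  have key : ∀ (v' u : ℤ), u = v' - 1 → Van P (cycles' U v') 0 →
      ∀ y : C ⟶ U.X u, y ≫ U.d u (u-1) = 0 → ∃ g : C ⟶ U.X v', g ≫ U.d v' u = y := by
    intro v' u h hvan y hy
    subst h
    -- corestrict y to the cycles
    have hy' : ∀ x : C, y.hom x ∈ LinearMap.ker (U.d (v'-1) (v'-1-1)).hom :=
      fun x => LinearMap.mem_ker.mpr (congrArg (fun g => g.hom x) hy)
    obtain ⟨g, hg⟩ := chase0 P (ic U v') (pc U v') (ic_pc U v') (pc_lift U v')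
      hvan (ModuleCat.ofHom (LinearMap.codRestrict _ y.hom hy'))
    refine ⟨g, ?_⟩
    apply ModuleCat.hom_ext
    apply LinearMap.ext
    intro x
    have h2 := congrArg (fun g => g.hom x) hg
    exact congrArg Subtype.val h2
  intro v y
  constructor
  · intro hy
    have hvan : Van P (cycles' U (v+1)) 0 :=
      (ext_subsingleton_iff_van P _ 0).mp (final1 1 le_rfl (v+1))
    obtain ⟨g, hg⟩ := key (v+1) v (by ring) hvan y hy
    exact ⟨g, hg⟩
  · rintro ⟨g, rfl⟩
    show (g ≫ U.d (v+1) v) ≫ U.d v (v-1) = 0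
    rw [Category.assoc, HomologicalComplex.d_comp_d, comp_zero]
end

section
/- Let A be a left-noetherian ring whose injective dimension as a left module over itself is finite, say equal to n. Then A satisfies Auslander's condition (AC) if and only if A satisfies the uniform Auslander condition (UAC); moreover, if A satisfies (AC), then the uniform bound n works: for all finitely generated left A-modules M and N, if Ext_A^i(M,N) = 0 for all sufficiently large i, then Ext_A^i(M,N) = 0 for all i > n. -/
open CategoryTheory Limits Opposite

universe u

/-- The uniform Auslander condition (UAC). -/
def SatisfiesUAC (A : Type u) [Ring A] : Prop :=
  ∃ b : ℕ, ∀ M N : ModuleCat.{u} A, Module.Finite A M → Module.Finite A N →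
    (∃ n : ℕ, ∀ i ≥ n, Subsingleton (ExtGroup M N i)) →
    ∀ i > b, Subsingleton (ExtGroup M N i)

/-- `N` has injective dimension at most `n`, characterized by vanishing of
`Ext^i(-, N)` for all `i > n`. -/
def InjDimLE {A : Type u} [Ring A] (N : ModuleCat.{u} A) (n : ℕ) : Prop :=
  ∀ M : ModuleCat.{u} A, ∀ i > n, Subsingleton (ExtGroup M N i)

noncomputable section

namespace AuxAC

variable {A : Type u} [Ring A]
variable {M : ModuleCat.{u} A} (P : ProjectiveResolution M)

/-- Postcomposition map on the Hom complex. -/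
def postcomp {Y Z : ModuleCat.{u} A} (f : Y ⟶ Z) :
    P.complex.linearYonedaObj ℤ Y ⟶ P.complex.linearYonedaObj ℤ Z where
  f i := ((linearYoneda ℤ (ModuleCat.{u} A)).map f).app (op (P.complex.X i))
  comm' i j _ := by
    ext (g : P.complex.X i ⟶ Y)
    change (P.complex.d j i ≫ g) ≫ f = P.complex.d j i ≫ (g ≫ f)
    simp

variable (S : ShortComplex (ModuleCat.{u} A))

/-- The short complex of Hom complexes. -/
def homSC : ShortComplex (CochainComplex (ModuleCat.{u} ℤ) ℕ) :=
  ShortComplex.mk (postcomp P S.f) (postcomp P S.g) (by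
    ext i (g : P.complex.X i ⟶ S.X₁)
    change (g ≫ S.f) ≫ S.g = _
    rw [Category.assoc, S.zero, Limits.comp_zero]
    rfl)

lemma homSC_shortExact (hS : S.ShortExact) : (homSC P S).ShortExact := by
  have := hS.mono_f
  have := hS.epi_g
  apply HomologicalComplex.shortExact_of_degreewise_shortExact
  intro i
  apply ShortComplex.ShortExact.mk'
  · -- exactness at middle
    rw [ShortComplex.moduleCat_exact_iff]
    intro (x₂ : P.complex.X i ⟶ S.X₂) hx₂
    have hx₂' : x₂ ≫ S.g = 0 := hx₂
    exact ⟨hS.exact.lift x₂ hx₂', hS.exact.lift_f x₂ hx₂'⟩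
  · -- mono
    rw [ModuleCat.mono_iff_injective]
    intro (a : P.complex.X i ⟶ S.X₁) (b : P.complex.X i ⟶ S.X₁) hab
    have : a ≫ S.f = b ≫ S.f := hab
    exact (cancel_mono S.f).mp this
  · -- epi
    rw [ModuleCat.epi_iff_surjective]
    intro (y : P.complex.X i ⟶ S.X₃)
    exact ⟨Projective.factorThru y S.g, Projective.factorThru_comp y S.g⟩

abbrev extObj (M Y : ModuleCat.{u} A) (i : ℕ) : ModuleCat ℤ :=
  ((Ext ℤ (ModuleCat.{u} A) i).obj (op M)).obj Y

lemma isZero_ext_iff (Y : ModuleCat.{u} A) (i : ℕ) :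
    IsZero (extObj M Y i) ↔ IsZero ((P.complex.linearYonedaObj ℤ Y).homology i) :=
  ⟨fun h => h.of_iso (P.isoExt i Y).symm, fun h => h.of_iso (P.isoExt i Y)⟩

lemma isZero_of_exact {E : ShortComplex (ModuleCat.{u} ℤ)} (hE : E.Exact)
    (h1 : IsZero E.X₁) (h3 : IsZero E.X₃) : IsZero E.X₂ :=
  hE.isZero_X₂ (h1.eq_of_src _ _) (h3.eq_of_tgt _ _)

lemma isZero_ext_X₂ (hS : S.ShortExact) (i : ℕ)
    (h1 : IsZero (extObj M S.X₁ i)) (h3 : IsZero (extObj M S.X₃ i)) :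
    IsZero (extObj M S.X₂ i) := by
  have P : ProjectiveResolution M := (HasProjectiveResolution.out (Z := M)).some
  have hT := homSC_shortExact P S hS
  rw [isZero_ext_iff P] at h1 h3 ⊢
  exact isZero_of_exact (hT.homology_exact₂ i) h1 h3

lemma isZero_ext_X₃ (hS : S.ShortExact) (i : ℕ)
    (h2 : IsZero (extObj M S.X₂ i)) (h1 : IsZero (extObj M S.X₁ (i + 1))) :
    IsZero (extObj M S.X₃ i) := by
  have P : ProjectiveResolution M := (HasProjectiveResolution.out (Z := M)).some
  have hT := homSC_shortExact P S hS
  rw [isZero_ext_iff P] at h2 h1 ⊢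
  exact isZero_of_exact (hT.homology_exact₃ i (i + 1) rfl) h2 h1

lemma isZero_ext_X₁ (hS : S.ShortExact) (i : ℕ)
    (h3 : IsZero (extObj M S.X₃ i)) (h2 : IsZero (extObj M S.X₂ (i + 1))) :
    IsZero (extObj M S.X₁ (i + 1)) := by
  have P : ProjectiveResolution M := (HasProjectiveResolution.out (Z := M)).some
  have hT := homSC_shortExact P S hS
  rw [isZero_ext_iff P] at h3 h2 ⊢
  exact isZero_of_exact (hT.homology_exact₁ i (i + 1) rfl) h3 h2

lemma subsingleton_iff_isZero {R : Type*} [Ring R] (X : ModuleCat R) :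
    Subsingleton X ↔ IsZero X := by
  constructor
  · intro h
    exact ModuleCat.isZero_of_subsingleton X
  · intro h
    have hid : (𝟙 X : X ⟶ X) = 0 := h.eq_of_src _ _
    refine ⟨fun a b => ?_⟩
    have ha : a = (𝟙 X : X ⟶ X) a := rfl
    have hb : b = (𝟙 X : X ⟶ X) b := rfl
    rw [ha, hb, hid]
    rfl

lemma isZero_ext_of_isZero {Z : ModuleCat.{u} A} (hZ : IsZero Z) (i : ℕ) :
    IsZero (extObj M Z i) := by
  have P : ProjectiveResolution M := (HasProjectiveResolution.out (Z := M)).some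
  rw [isZero_ext_iff P]
  rw [← HomologicalComplex.exactAt_iff_isZero_homology, HomologicalComplex.exactAt_iff]
  apply ShortComplex.exact_of_isZero_X₂
  have : Subsingleton ↑(ModuleCat.of ℤ (P.complex.X i ⟶ Z)) := ⟨fun a b => hZ.eq_of_tgt a b⟩
  exact ModuleCat.isZero_of_subsingleton (ModuleCat.of ℤ (P.complex.X i ⟶ Z))

/-- The linear map `x ↦ Fin.cons 0 x`. -/
def consL (k : ℕ) : (Fin k → A) →ₗ[A] (Fin (k + 1) → A) where
  toFun x := Fin.cons 0 x
  map_add' x y := by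
    funext i
    refine Fin.cases ?_ ?_ i <;> simp
  map_smul' c x := by
    funext i
    refine Fin.cases ?_ ?_ i <;> simp

/-- The short exact sequence `0 → A^k → A^(k+1) → A → 0`. -/
def consSC (k : ℕ) : ShortComplex (ModuleCat.{u} A) :=
  ShortComplex.mk
    (ModuleCat.ofHom (consL (A := A) k) :
      ModuleCat.of A (Fin k → A) ⟶ ModuleCat.of A (Fin (k + 1) → A))
    (ModuleCat.ofHom (LinearMap.proj 0) :
      ModuleCat.of A (Fin (k + 1) → A) ⟶ ModuleCat.of A A)
    (by
      apply ModuleCat.hom_ext; apply LinearMap.ext; intro x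
      show Fin.cons (α := fun _ => A) 0 x 0 = 0
      simp)

lemma consSC_shortExact (k : ℕ) : (consSC (A := A) k).ShortExact := by
  apply ShortComplex.ShortExact.mk'
  · rw [ShortComplex.moduleCat_exact_iff]
    intro (x : Fin (k + 1) → A) hx
    refine ⟨Fin.tail x, ?_⟩
    have hx0 : x 0 = 0 := hx
    change Fin.cons 0 (Fin.tail x) = x
    rw [← hx0, Fin.cons_self_tail]
  · rw [ModuleCat.mono_iff_injective]
    intro x y hxy
    funext i
    have : Fin.cons (α := fun _ => A) 0 x i.succ = Fin.cons (α := fun _ => A) 0 y i.succ := by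
      rw [show Fin.cons (α := fun _ => A) 0 x = Fin.cons 0 y from hxy]
    exact this
  · rw [ModuleCat.epi_iff_surjective]
    intro a
    exact ⟨Fin.cons a 0, rfl⟩

lemma free_vanish (n : ℕ) (hid : ∀ i > n, IsZero (extObj M (ModuleCat.of A A) i))
    (k : ℕ) : ∀ i > n, IsZero (extObj M (ModuleCat.of A (Fin k → A)) i) := by
  induction k with
  | zero =>
    intro i hi
    exact isZero_ext_of_isZero (M := M) (ModuleCat.isZero_of_subsingleton _) i
  | succ k ih =>
    intro i hi
    exact isZero_ext_X₂ (consSC k) (consSC_shortExact k) i (ih i hi) (hid i hi)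

lemma key [IsNoetherianRing A] (M₀ : ModuleCat.{u} A) (n b : ℕ)
    (hid : ∀ i > n, IsZero (extObj M₀ (ModuleCat.of A A) i))
    (hb : ∀ N : ModuleCat.{u} A, Module.Finite A N →
      (∃ m, ∀ i ≥ m, IsZero (extObj M₀ N i)) → ∀ i > b, IsZero (extObj M₀ N i)) :
    ∀ N : ModuleCat.{u} A, Module.Finite A N →
      (∃ m, ∀ i ≥ m, IsZero (extObj M₀ N i)) → ∀ i > n, IsZero (extObj M₀ N i) := by
  have Q : ∀ j, ∀ N : ModuleCat.{u} A, Module.Finite A N →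
      (∃ m, ∀ i ≥ m, IsZero (extObj M₀ N i)) →
      ∀ i, n < i → b < i + j → IsZero (extObj M₀ N i) := by
    intro j
    induction j with
    | zero =>
      intro N hN hev i hi hbi
      exact hb N hN hev i (by omega)
    | succ j ih =>
      intro N hN hev i hi hbi
      letI := hN
      obtain ⟨k, π, hπ⟩ := Module.Finite.exists_fin' A N
      let S2 : ShortComplex (ModuleCat.{u} A) :=
        ShortComplex.mk
          (ModuleCat.ofHom (LinearMap.ker π).subtype :
            ModuleCat.of A ↥(LinearMap.ker π) ⟶ ModuleCat.of A (Fin k → A))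
          (ModuleCat.ofHom π : ModuleCat.of A (Fin k → A) ⟶ N)
          (by
            ext x
            exact (LinearMap.mem_ker.mp x.2).trans rfl)
      have hS2 : S2.ShortExact := by
        apply ShortComplex.ShortExact.mk'
        · rw [ShortComplex.moduleCat_exact_iff]
          intro x hx
          exact ⟨⟨x, hx⟩, rfl⟩
        · rw [ModuleCat.mono_iff_injective]
          exact Subtype.val_injective
        · rw [ModuleCat.epi_iff_surjective]
          exact hπ
      have hKfin : Module.Finite A ↥(LinearMap.ker π) :=
        Module.Finite.iff_fg.mpr (IsNoetherian.noetherian _)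
      have hKev : ∃ m, ∀ i ≥ m, IsZero (extObj M₀ (ModuleCat.of A ↥(LinearMap.ker π)) i) := by
        obtain ⟨m, hm⟩ := hev
        refine ⟨m + n + 1, fun i hi => ?_⟩
        obtain ⟨i', rfl⟩ : ∃ i', i = i' + 1 := ⟨i - 1, by omega⟩
        exact isZero_ext_X₁ S2 hS2 i' (hm i' (by omega))
          (free_vanish n hid k (i' + 1) (by omega))
      exact isZero_ext_X₃ S2 hS2 i (free_vanish n hid k i hi)
        (ih (ModuleCat.of A ↥(LinearMap.ker π)) hKfin hKev (i + 1) (by omega) (by omega))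
  exact fun N hN hev i hi => Q (b + 1) N hN hev i hi (by omega)

end AuxAC

end
open CategoryTheory



/-- For a left-noetherian ring `A` whose injective dimension as a left module over
itself is (finite and) equal to `n`, the conditions (AC) and (UAC) are equivalent;
moreover, if `A` satisfies (AC), then `n` is a uniform Auslander bound. -/
theorem stmt4 (A : Type u) [Ring A] [IsNoetherianRing A] (n : ℕ)
    (hid : InjDimLE (ModuleCat.of A A) n)
    (hid' : ∀ m : ℕ, InjDimLE (ModuleCat.of A A) m → n ≤ m) :
    (SatisfiesAC A ↔ SatisfiesUAC A) ∧
    (SatisfiesAC A →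
      ∀ M N : ModuleCat.{u} A, Module.Finite A M → Module.Finite A N →
        (∃ m : ℕ, ∀ i ≥ m, Subsingleton (ExtGroup M N i)) →
        ∀ i > n, Subsingleton (ExtGroup M N i)) := by
  have main : SatisfiesAC A → ∀ M N : ModuleCat.{u} A, Module.Finite A M → Module.Finite A N →
      (∃ m : ℕ, ∀ i ≥ m, Subsingleton (ExtGroup M N i)) →
      ∀ i > n, Subsingleton (ExtGroup M N i) := by
    intro hAC M N hM hN hev i hi
    obtain ⟨b, hb⟩ := hAC M hM
    have hid2 : ∀ i > n, CategoryTheory.Limits.IsZero (AuxAC.extObj M (ModuleCat.of A A) i) :=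
      fun i hi => (AuxAC.subsingleton_iff_isZero _).mp (hid M i hi)
    have hb2 : ∀ N' : ModuleCat.{u} A, Module.Finite A N' →
        (∃ m, ∀ i ≥ m, CategoryTheory.Limits.IsZero (AuxAC.extObj M N' i)) →
        ∀ i > b, CategoryTheory.Limits.IsZero (AuxAC.extObj M N' i) := by
      rintro N' hN' ⟨m, hm⟩ i hi
      exact (AuxAC.subsingleton_iff_isZero _).mp
        (hb N' hN' ⟨m, fun i hi => (AuxAC.subsingleton_iff_isZero _).mpr (hm i hi)⟩ i hi)
    have hev2 : ∃ m, ∀ i ≥ m, CategoryTheory.Limits.IsZero (AuxAC.extObj M N i) := by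
      obtain ⟨m, hm⟩ := hev
      exact ⟨m, fun i hi => (AuxAC.subsingleton_iff_isZero _).mp (hm i hi)⟩
    exact (AuxAC.subsingleton_iff_isZero _).mpr
      (AuxAC.key M n b hid2 hb2 N hN hev2 i hi)
  refine ⟨⟨fun hAC => ⟨n, main hAC⟩, ?_⟩, main⟩
  rintro ⟨b, hb⟩ M hM
  exact ⟨b, fun N hN hev => hb M N hM hN hev⟩
end

section
/- Let A and B be left-noetherian rings that are Morita equivalent (i.e., their categories of left modules are equivalent). If A satisfies Auslander's condition (AC), then B satisfies (AC). -/
open CategoryTheory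

universe u

namespace MoritaACAux

open CategoryTheory Limits Opposite

variable {A B : Type u} [Ring A] [Ring B]

noncomputable section

lemma functor_additive (e : ModuleCat.{u} A ≌ ModuleCat.{u} B) : e.functor.Additive :=
  Functor.additive_of_preserves_binary_products _

lemma functor_ph (e : ModuleCat.{u} A ≌ ModuleCat.{u} B) : e.functor.PreservesHomology := by
  have := functor_additive e
  exact ⟨fun f => inferInstance, fun f => inferInstance⟩

/-- The image of a projective resolution under an equivalence of module categories. -/
def mapRes (e : ModuleCat.{u} A ≌ ModuleCat.{u} B) {M : ModuleCat.{u} A}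
    (P : ProjectiveResolution M) : ProjectiveResolution (e.functor.obj M) := by
  haveI := functor_additive e
  haveI := functor_ph e
  exact
  { complex := (e.functor.mapHomologicalComplex _).obj P.complex
    projective := fun n => (e.map_projective_iff _).mpr (P.projective n)
    π := (e.functor.mapHomologicalComplex _).map P.π ≫
      (HomologicalComplex.singleMapHomologicalComplex e.functor (ComplexShape.down ℕ) 0).hom.app M
    quasiIso := inferInstance }

/-- Hom-sets correspond additively under an equivalence. -/
def homAddEquiv (e : ModuleCat.{u} A ≌ ModuleCat.{u} B) (X Y : ModuleCat.{u} A) :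
    (X ⟶ Y) ≃+ (e.functor.obj X ⟶ e.functor.obj Y) := by
  haveI := functor_additive e
  exact
  { toFun := e.functor.map
    invFun := e.functor.preimage
    left_inv := fun f => e.functor.preimage_map f
    right_inv := fun f => e.functor.map_preimage f
    map_add' := fun f g => e.functor.map_add }

/-- The Hom-complexes computing Ext correspond under an equivalence. -/
def yonedaIso (e : ModuleCat.{u} A ≌ ModuleCat.{u} B) {M : ModuleCat.{u} A}
    (N : ModuleCat.{u} A) (P : ProjectiveResolution M) :
    (mapRes e P).complex.linearYonedaObj ℤ (e.functor.obj N) ≅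
      P.complex.linearYonedaObj ℤ N := by
  haveI := functor_additive e
  refine HomologicalComplex.Hom.isoOfComponents
    (fun i => ((homAddEquiv e (P.complex.X i) N).symm.toIntLinearEquiv.toModuleIso)) ?_
  intro i j hij
  ext g
  simp [ChainComplex.linearYonedaObj, mapRes, homAddEquiv]
  apply e.functor.map_injective
  show e.functor.map (P.complex.d j i ≫ e.functor.preimage g)
      = e.functor.map (e.functor.preimage (e.functor.map (P.complex.d j i) ≫ g))
  simp
  erw [e.functor.map_preimage]

/-- Ext groups are invariant under equivalence of module categories. -/
def extIso (e : ModuleCat.{u} A ≌ ModuleCat.{u} B) (M N : ModuleCat.{u} A) (i : ℕ) :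
    (ExtGroup (e.functor.obj M) (e.functor.obj N) i : ModuleCat.{u} ℤ) ≅
      (ExtGroup M N i : ModuleCat.{u} ℤ) := by
  have P : ProjectiveResolution M := (HasProjectiveResolution.out (Z := M)).some
  exact ((mapRes e P).isoExt i (e.functor.obj N)) ≪≫
    (HomologicalComplex.homologyFunctor _ _ i).mapIso (yonedaIso e N P) ≪≫
    (P.isoExt i N).symm

lemma subsingleton_ext_iff (e : ModuleCat.{u} A ≌ ModuleCat.{u} B)
    (M N : ModuleCat.{u} A) (i : ℕ) :
    Subsingleton (ExtGroup (e.functor.obj M) (e.functor.obj N) i) ↔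
      Subsingleton (ExtGroup M N i) :=
  Equiv.subsingleton_congr ((forget _).mapIso (extIso e M N i)).toEquiv

/-- Submodule lattices embed under an equivalence of module categories. -/
def subEmb (e : ModuleCat.{u} A ≌ ModuleCat.{u} B) (N : ModuleCat.{u} A) :
    Submodule A N ↪o Submodule B (e.functor.obj N) := by
  refine OrderEmbedding.ofMapLEIff (fun S =>
    ModuleCat.subobjectModule (e.functor.obj N)
      (Subobject.mk (e.functor.map ((ModuleCat.subobjectModule N).symm S).arrow))) (fun S T => ?_)
  rw [OrderIso.le_iff_le]
  constructor
  · intro h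
    rw [← (ModuleCat.subobjectModule N).symm.le_iff_le]
    refine Subobject.le_of_comm (e.functor.preimage (Subobject.ofMkLEMk _ _ h)) ?_
    apply e.functor.map_injective
    simp [Subobject.ofMkLEMk_comp]
  · intro h
    exact Subobject.mk_le_mk_of_comm
      (e.functor.map (Subobject.ofLE _ _ ((ModuleCat.subobjectModule N).symm.le_iff_le.mpr h))) (by
        rw [← e.functor.map_comp, Subobject.ofLE_arrow])

lemma isNoetherian_of_equiv (e : ModuleCat.{u} A ≌ ModuleCat.{u} B) (N : ModuleCat.{u} A)
    [h : IsNoetherian B (e.functor.obj N)] : IsNoetherian A N := by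
  rw [isNoetherian_iff] at h ⊢
  exact RelEmbedding.wellFounded
    ⟨(subEmb e N).toEmbedding, fun {a b} => (subEmb e N).lt_iff_lt (a := b) (b := a)⟩ h

lemma finite_inverse (e : ModuleCat.{u} A ≌ ModuleCat.{u} B) [IsNoetherianRing B]
    (N : ModuleCat.{u} B) (hN : Module.Finite B N) : Module.Finite A (e.inverse.obj N) := by
  haveI := hN
  haveI : IsNoetherian B ((𝟭 (ModuleCat B)).obj N) :=
    inferInstanceAs (IsNoetherian B N)
  haveI : IsNoetherian B (e.functor.obj (e.inverse.obj N)) :=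
    isNoetherian_of_linearEquiv (e.counitIso.app N).symm.toLinearEquiv
  haveI := isNoetherian_of_equiv e (e.inverse.obj N)
  exact ⟨IsNoetherian.noetherian ⊤⟩

end

end MoritaACAux

/-- Auslander's condition (AC) transfers along Morita equivalence. -/
theorem stmt6 (A B : Type u) [Ring A] [Ring B]
    [IsNoetherianRing A] [IsNoetherianRing B]
    (morita : Nonempty (ModuleCat.{u} A ≌ ModuleCat.{u} B))
    (hA : SatisfiesAC A) : SatisfiesAC B := by
  obtain ⟨e⟩ := morita
  intro M hM
  have hM' : Module.Finite A (e.inverse.obj M) := MoritaACAux.finite_inverse e M hM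
  obtain ⟨b, hb⟩ := hA (e.inverse.obj M) hM'
  refine ⟨b, fun N hN hvan i hi => ?_⟩
  have hN' : Module.Finite A (e.inverse.obj N) := MoritaACAux.finite_inverse e N hN
  have key : ∀ j : ℕ, Subsingleton (ExtGroup (e.inverse.obj M) (e.inverse.obj N) j) ↔
      Subsingleton (ExtGroup M N j) := fun j =>
    MoritaACAux.subsingleton_ext_iff e.symm M N j
  obtain ⟨n, hn⟩ := hvan
  exact (key i).mp (hb (e.inverse.obj N) hN'
    ⟨n, fun j hj => (key j).mpr (hn j hj)⟩ i hi)
end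

section
/- Let A and B be left-noetherian rings that are Morita equivalent (i.e., their categories of left modules are equivalent). If A satisfies the uniform Auslander condition (UAC), then B satisfies (UAC). -/
open CategoryTheory

universe u

namespace UACAux

open CategoryTheory Limits

/-- An equivalence between partial orders (as categories) gives an order isomorphism. -/
noncomputable def orderIsoOfEquiv {α β : Type*} [PartialOrder α] [PartialOrder β]
    (F : α ≌ β) : α ≃o β where
  toFun := F.functor.obj
  invFun := F.inverse.obj
  left_inv x := le_antisymm (leOfHom (F.unitIso.inv.app x)) (leOfHom (F.unitIso.hom.app x))
  right_inv y := le_antisymm (leOfHom (F.counitIso.hom.app y)) (leOfHom (F.counitIso.inv.app y))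
  map_rel_iff' {x y} := by
    constructor
    · intro h
      have h1 : x ≤ F.inverse.obj (F.functor.obj x) := leOfHom (F.unitIso.hom.app x)
      have h2 : F.inverse.obj (F.functor.obj x) ≤ F.inverse.obj (F.functor.obj y) :=
        leOfHom (F.inverse.map (homOfLE h))
      have h3 : F.inverse.obj (F.functor.obj y) ≤ y := leOfHom (F.unitIso.inv.app y)
      exact le_trans h1 (le_trans h2 h3)
    · intro h
      exact leOfHom (F.functor.map (homOfLE h))

variable {A B : Type u} [Ring A] [Ring B] (e : ModuleCat.{u} A ≌ ModuleCat.{u} B)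

instance : e.functor.Additive := Functor.additive_of_preserves_binary_products _
instance : e.inverse.Additive := Functor.additive_of_preserves_binary_products _

/-- Finiteness transfers along the equivalence (both rings noetherian). -/
lemma finite_inverse [IsNoetherianRing A] [IsNoetherianRing B]
    (N : ModuleCat.{u} B) (hN : Module.Finite B N) :
    Module.Finite A (e.inverse.obj N) := by
  have hNoe : IsNoetherian B N := isNoetherian_of_isNoetherianRing_of_finite B N
  have hwf : WellFoundedGT (Submodule B N) := isNoetherian_iff'.mp hNoe
  let f : Submodule A (e.inverse.obj N) ≃o Submodule B N :=
    ((ModuleCat.subobjectModule (e.inverse.obj N)).symm.trans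
      (orderIsoOfEquiv (Subobject.lowerEquivalence
        (MonoOver.congr (e.inverse.obj N) e)))).trans
      ((Subobject.mapIsoToOrderIso (e.counitIso.app N)).trans (ModuleCat.subobjectModule N))
  have : IsNoetherian A (e.inverse.obj N) :=
    isNoetherian_iff'.mpr (f.toOrderEmbedding.wellFoundedGT)
  infer_instance

/-- The additive equivalence on hom groups given by the adjunction of the equivalence. -/
noncomputable def homAddEquiv (X : ModuleCat.{u} A) (N : ModuleCat.{u} B) :
    (e.functor.obj X ⟶ N) ≃+ (X ⟶ e.inverse.obj N) :=
  { e.toAdjunction.homEquiv X N with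
    map_add' := fun f g => by
      simp [Adjunction.homEquiv_unit, Functor.map_add, Preadditive.comp_add] }

/-- `e.functor` maps a projective resolution to a projective resolution. -/
noncomputable def mapResolution {X : ModuleCat.{u} A} (P : ProjectiveResolution X)
    (M : ModuleCat.{u} B) (hM : e.functor.obj X ≅ M) : ProjectiveResolution M where
  complex := (e.functor.mapHomologicalComplex _).obj P.complex
  projective n := (e.map_projective_iff _).mpr (P.projective n)
  π := (e.functor.mapHomologicalComplex _).map P.π ≫
    (HomologicalComplex.singleMapHomologicalComplex e.functor _ 0).hom.app X ≫
    (ChainComplex.single₀ (ModuleCat.{u} B)).map hM.hom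
  quasiIso := by infer_instance

/-- The iso of Yoneda complexes. -/
noncomputable def yonedaComplexIso {X : ModuleCat.{u} A} (P : ProjectiveResolution X)
    (N : ModuleCat.{u} B) :
    (ChainComplex.linearYonedaObj ((e.functor.mapHomologicalComplex _).obj P.complex) ℤ N) ≅
      P.complex.linearYonedaObj ℤ (e.inverse.obj N) :=
  HomologicalComplex.Hom.isoOfComponents
    (fun n => (homAddEquiv e (P.complex.X n) N).toIntLinearEquiv.toModuleIso)
    (fun i j hij => by
      ext f
      exact (e.toAdjunction.homEquiv_naturality_left _ _).symm)

end UACAux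

namespace UACAux

variable {A B : Type u} [Ring A] [Ring B] (e : ModuleCat.{u} A ≌ ModuleCat.{u} B)

/-- The Ext groups are isomorphic. -/
noncomputable def extLinearIso (M N : ModuleCat.{u} B) (i : ℕ) :
    ((Ext ℤ (ModuleCat.{u} B) i).obj (Opposite.op M)).obj N ≅
      ((Ext ℤ (ModuleCat.{u} A) i).obj (Opposite.op (e.inverse.obj M))).obj (e.inverse.obj N) :=
  let P : ProjectiveResolution (e.inverse.obj M) := ProjectiveResolution.of _
  ((mapResolution e P M (e.counitIso.app M)).isoExt i N) ≪≫
    (HomologicalComplex.homologyFunctor _ _ i).mapIso (yonedaComplexIso e P N) ≪≫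
    (P.isoExt i (e.inverse.obj N)).symm

noncomputable def extEquiv (M N : ModuleCat.{u} B) (i : ℕ) :
    ExtGroup M N i ≃ ExtGroup (e.inverse.obj M) (e.inverse.obj N) i :=
  ((forget (ModuleCat ℤ)).mapIso (extLinearIso e M N i)).toEquiv

end UACAux

/-- The uniform Auslander condition (UAC) transfers along Morita equivalence. -/
theorem stmt7 (A B : Type u) [Ring A] [Ring B]
    [IsNoetherianRing A] [IsNoetherianRing B]
    (morita : Nonempty (ModuleCat.{u} A ≌ ModuleCat.{u} B))
    (hA : SatisfiesUAC A) : SatisfiesUAC B := by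
  obtain ⟨e⟩ := morita
  obtain ⟨b, hb⟩ := hA
  refine ⟨b, fun M N hM hN h i hi => ?_⟩
  obtain ⟨n, hn⟩ := h
  have key : ∀ j, Subsingleton (ExtGroup M N j) ↔
      Subsingleton (ExtGroup (e.inverse.obj M) (e.inverse.obj N) j) :=
    fun j => (UACAux.extEquiv e M N j).subsingleton_congr
  exact (key i).mpr (hb _ _ (UACAux.finite_inverse e M hM) (UACAux.finite_inverse e N hN)
    ⟨n, fun j hj => (key j).mp (hn j hj)⟩ i hi)
end

section
/- Let A be a left-noetherian ring satisfying Auslander's condition (AC) and let n be a positive integer. Then the ring of n × n matrices over A satisfies (AC). -/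
set_option linter.unusedSectionVars false
set_option maxHeartbeats 1000000

open CategoryTheory Matrix

universe u

namespace Morita

variable {A : Type u} [Ring A] {n : ℕ} [NeZero n]

local notation "R" => Matrix (Fin n) (Fin n) A

/-- matrix units -/
def E (i j : Fin n) : Matrix (Fin n) (Fin n) A := Matrix.single i j 1

section vec

variable (M : Type u) [AddCommGroup M] [Module A M]

instance matSMul : SMul (Matrix (Fin n) (Fin n) A) (Fin n → M) :=
  ⟨fun x v i => ∑ j, x i j • v j⟩

lemma matSMul_def (x : Matrix (Fin n) (Fin n) A) (v : Fin n → M) (i : Fin n) :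
    (x • v) i = ∑ j, x i j • v j := rfl

instance matModule : Module (Matrix (Fin n) (Fin n) A) (Fin n → M) where
  one_smul v := by
    funext i
    simp [matSMul_def, Matrix.one_apply, ite_smul]
  mul_smul x y v := by
    funext i
    simp only [matSMul_def, Matrix.mul_apply, Finset.sum_smul, Finset.smul_sum, mul_smul]
    rw [Finset.sum_comm]
  smul_zero x := by funext i; simp [matSMul_def]
  smul_add x v w := by
    funext i
    simp [matSMul_def, smul_add, Finset.sum_add_distrib]
  add_smul x y v := by
    funext i
    simp [matSMul_def, add_smul, Finset.sum_add_distrib]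
  zero_smul v := by funext i; simp [matSMul_def]

end vec

end Morita

namespace Morita2
open Morita
variable {A : Type u} [Ring A] {n : ℕ} [NeZero n]

local notation "R" => Matrix (Fin n) (Fin n) A

variable {M : Type u} [AddCommGroup M] [Module A M]

lemma std_smul_apply (i j k : Fin n) (a : A) (v : Fin n → M) :
    (Matrix.single i j a • v) k = if i = k then a • v j else 0 := by
  simp only [matSMul_def, Matrix.single, Matrix.of_apply, ite_smul, zero_smul]
  by_cases h : i = k <;> simp [h, Finset.sum_ite_eq]

lemma one_eq_sum_E : (1 : Matrix (Fin n) (Fin n) A) = ∑ i, E i i := by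
  ext a b
  rw [Matrix.sum_apply]
  simp only [E, Matrix.single, Matrix.of_apply, Matrix.one_apply]
  by_cases h : a = b
  · subst h; simp [Finset.sum_ite_eq']
  · rw [if_neg h, Finset.sum_eq_zero]
    intro i _
    rw [if_neg]
    rintro ⟨rfl, rfl⟩
    exact h rfl

section N
variable (A) (n)
variable (N : Type u) [AddCommGroup N] [Module (Matrix (Fin n) (Fin n) A) N]

/-- the subgroup of elements fixed by `E 0 0`. -/
def fixSubgroup : AddSubgroup N where
  carrier := {x | (E (0 : Fin n) 0 : Matrix (Fin n) (Fin n) A) • x = x}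
  add_mem' {a b} h1 h2 := show (E (0 : Fin n) 0 : Matrix (Fin n) (Fin n) A) • (a + b) = a + b by
    rw [smul_add]
    exact congrArg₂ (· + ·) h1 h2
  zero_mem' := smul_zero _
  neg_mem' {a} h := show (E (0 : Fin n) 0 : Matrix (Fin n) (Fin n) A) • (-a) = -a by
    rw [smul_neg]
    exact congrArg Neg.neg h

def Fix0 : Type u := ↥(fixSubgroup A n N)

instance : AddCommGroup (Fix0 A n N) :=
  inferInstanceAs (AddCommGroup (fixSubgroup A n N))

variable {A n N}

def fixVal (x : Fix0 A n N) : N := Subtype.val x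

lemma fixVal_injective : Function.Injective (fixVal (A := A) (n := n) (N := N)) :=
  fun _ _ h => Subtype.ext h

@[simp] lemma fixVal_add (x y : Fix0 A n N) : fixVal (x + y) = fixVal x + fixVal y := rfl
@[simp] lemma fixVal_zero : fixVal (0 : Fix0 A n N) = 0 := rfl
@[simp] lemma fixVal_sum {ι : Type*} (s : Finset ι) (f : ι → Fix0 A n N) :
    fixVal (∑ i ∈ s, f i) = ∑ i ∈ s, fixVal (f i) :=
  map_sum (AddSubgroupClass.subtype (fixSubgroup A n N)) f s

lemma fixVal_spec (x : Fix0 A n N) :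
    (E (0 : Fin n) 0 : Matrix (Fin n) (Fin n) A) • fixVal x = fixVal x := x.2

def fixMk (x : N) (h : (E (0 : Fin n) 0 : Matrix (Fin n) (Fin n) A) • x = x) : Fix0 A n N :=
  ⟨x, h⟩

@[simp] lemma fixVal_mk (x : N) (h) : fixVal (fixMk (A := A) (n := n) x h) = x := rfl

def E00 (a : A) : Matrix (Fin n) (Fin n) A := Matrix.single (0 : Fin n) (0 : Fin n) a

instance : Module A (Fix0 A n N) where
  smul a x := fixMk ((E00 a : Matrix (Fin n) (Fin n) A) • fixVal x)
    (by rw [smul_smul]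
        show (E (0:Fin n) 0 * E00 a) • _ = _
        rw [E, E00, Matrix.single_mul_single_same, one_mul])
  one_smul x := fixVal_injective (by
    show (E00 (1:A) : Matrix (Fin n) (Fin n) A) • fixVal x = fixVal x
    exact fixVal_spec x)
  mul_smul a b x := fixVal_injective (by
    show (E00 (a*b) : Matrix (Fin n) (Fin n) A) • fixVal x =
      (E00 a : Matrix (Fin n) (Fin n) A) • (E00 b : Matrix (Fin n) (Fin n) A) • fixVal x
    rw [smul_smul, E00, E00, E00, Matrix.single_mul_single_same])
  smul_zero a := fixVal_injective (by
    show (E00 a : Matrix (Fin n) (Fin n) A) • (0:N) = (0:N); simp)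
  smul_add a x y := fixVal_injective (by
    show (E00 a : Matrix (Fin n) (Fin n) A) • (fixVal x + fixVal y) =
      (E00 a : Matrix (Fin n) (Fin n) A) • fixVal x + (E00 a : Matrix (Fin n) (Fin n) A) • fixVal y
    rw [smul_add])
  add_smul a b x := fixVal_injective (by
    show (E00 (a+b) : Matrix (Fin n) (Fin n) A) • fixVal x =
      (E00 a : Matrix (Fin n) (Fin n) A) • fixVal x + (E00 b : Matrix (Fin n) (Fin n) A) • fixVal x
    rw [E00, E00, E00, Matrix.single_add, add_smul])
  zero_smul x := fixVal_injective (by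
    show (E00 (0:A) : Matrix (Fin n) (Fin n) A) • fixVal x = (0:N)
    rw [E00, Matrix.single_zero, zero_smul])

@[simp] lemma fixVal_smul (a : A) (x : Fix0 A n N) :
    fixVal (a • x) = (E00 a : Matrix (Fin n) (Fin n) A) • fixVal x := rfl

end N
section equiv
variable {N : Type u} [AddCommGroup N] [Module (Matrix (Fin n) (Fin n) A) N]

lemma E_mul_matrix (i : Fin n) (r : Matrix (Fin n) (Fin n) A) :
    (E (0 : Fin n) i : Matrix (Fin n) (Fin n) A) * r
      = ∑ j, Matrix.single (0 : Fin n) j (r i j) := by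
  ext a b
  rw [Matrix.sum_apply]
  by_cases h : a = 0
  · subst h
    rw [E, Matrix.single_mul_apply_same, one_mul]
    simp only [Matrix.single, Matrix.of_apply]
    rw [Finset.sum_congr rfl (g := fun j => if j = b then r i j else 0)
      (fun j _ => by by_cases hj : j = b <;> simp [hj]), Finset.sum_ite_eq' Finset.univ b]
    simp
  · rw [E, Matrix.single_mul_apply_of_ne (h := h)]
    symm
    refine Finset.sum_eq_zero fun j _ => ?_
    simp only [Matrix.single, Matrix.of_apply]
    rw [if_neg]
    rintro ⟨h1, h2⟩
    exact h h1.symm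

variable (A n N)

/-- The Morita equivalence at the module level. -/
def fixEquiv : N ≃ₗ[Matrix (Fin n) (Fin n) A] (Fin n → Fix0 A n N) where
  toFun x i := fixMk ((E (0 : Fin n) i : Matrix (Fin n) (Fin n) A) • x)
    (by rw [smul_smul]
        show ((E (0:Fin n) 0 : Matrix (Fin n) (Fin n) A) * E (0:Fin n) i) • x = _
        rw [E, E, Matrix.single_mul_single_same, one_mul])
  map_add' x y := by
    funext i
    apply fixVal_injective
    show (E (0:Fin n) i : Matrix (Fin n) (Fin n) A) • (x + y) = _ • x + _ • y
    rw [smul_add]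
  map_smul' r x := by
    funext i
    apply fixVal_injective
    show (E (0:Fin n) i : Matrix (Fin n) (Fin n) A) • (r • x)
      = fixVal ((r • (fun j => fixMk ((E (0 : Fin n) j : Matrix (Fin n) (Fin n) A) • x) _)) i)
    rw [matSMul_def, fixVal_sum]
    simp only [fixVal_smul, fixVal_mk, smul_smul]
    rw [← Finset.sum_smul, E_mul_matrix]
    congr 1
    refine Finset.sum_congr rfl fun j _ => ?_
    rw [E00, E, Matrix.single_mul_single_same, mul_one]
  invFun v := ∑ i, (E i (0 : Fin n) : Matrix (Fin n) (Fin n) A) • fixVal (v i)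
  left_inv x := by
    simp only [fixVal_mk, smul_smul]
    have : ∀ i : Fin n, ((E i (0:Fin n) : Matrix (Fin n) (Fin n) A) * E (0:Fin n) i) • x
        = (E i i : Matrix (Fin n) (Fin n) A) • x := by
      intro i
      rw [E, E, E, Matrix.single_mul_single_same, one_mul]
    rw [Finset.sum_congr rfl (fun i _ => this i), ← Finset.sum_smul, ← one_eq_sum_E, one_smul]
  right_inv v := by
    funext i
    apply fixVal_injective
    rw [fixVal_mk, Finset.smul_sum]
    simp only [smul_smul]
    have : ∀ j : Fin n, ((E (0:Fin n) i : Matrix (Fin n) (Fin n) A) * E j (0:Fin n))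
        • fixVal (v j) = if i = j then fixVal (v i) else 0 := by
      intro j
      by_cases h : i = j
      · subst h
        rw [E, E, Matrix.single_mul_single_same, one_mul, if_pos rfl]
        exact fixVal_spec (v i)
      · rw [E, E, Matrix.single_mul_single_of_ne (1:A) (0:Fin n) i j (fun hh => h hh) (1:A), zero_smul, if_neg h]
    rw [Finset.sum_congr rfl (fun j _ => this j), Finset.sum_ite_eq Finset.univ i
      (fun _ => fixVal (v i))]
    simp

end equiv
section functor
variable (A n)

/-- The Morita functor `Mod A ⥤ Mod (Mat_n A)`. -/
def matG : ModuleCat.{u} A ⥤ ModuleCat.{u} (Matrix (Fin n) (Fin n) A) where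
  obj M := ModuleCat.of (Matrix (Fin n) (Fin n) A) (Fin n → M)
  map {M M'} f := ModuleCat.ofHom
    { toFun := fun v i => f (v i)
      map_add' := fun v w => by funext i; exact map_add f.hom _ _
      map_smul' := fun r v => by
        funext i
        show f ((r • v) i) = (r • fun j => f (v j)) i
        rw [matSMul_def, matSMul_def, map_sum]
        exact Finset.sum_congr rfl fun j _ => map_smul f.hom _ _ }
  map_id M := rfl
  map_comp f g := rfl

instance : (matG A n).Additive where
  map_add := rfl

/-- `matG` is fully faithful. -/
def matGFF : (matG A n).FullyFaithful where
  preimage {M M'} f := ModuleCat.ofHom (X := M) (Y := M')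
    { toFun := fun m => f (Pi.single (0 : Fin n) m) (0 : Fin n)
      map_add' := fun x y => by
        show f (Pi.single (0:Fin n) (x + y)) 0 = f (Pi.single (0:Fin n) x) 0 + f (Pi.single (0:Fin n) y) 0
        rw [Pi.single_add]
        exact congrFun (map_add f.hom _ _) 0
      map_smul' := fun a m => by
        have h1 : (Pi.single (0 : Fin n) (a • m) : Fin n → M)
            = (E00 a : Matrix (Fin n) (Fin n) A) • Pi.single (0 : Fin n) m := by
          funext j
          rw [E00, std_smul_apply, Pi.single_eq_same]
          by_cases hj : j = 0
          · subst hj; rw [if_pos rfl, Pi.single_eq_same]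
          · rw [if_neg (fun hh => hj hh.symm), Pi.single_eq_of_ne hj]
        show f (Pi.single (0:Fin n) (a • m)) 0 = a • f (Pi.single (0:Fin n) m) 0
        rw [h1]
        exact (congrFun (_root_.map_smul f.hom (E00 a : Matrix (Fin n) (Fin n) A)
          (Pi.single (0:Fin n) m : Fin n → M)) 0).trans
          ((std_smul_apply (M := M') 0 0 0 a (f.hom (Pi.single (0:Fin n) m))).trans
            (if_pos (rfl : (0:Fin n) = 0))) }
  map_preimage {M M'} f := by
    refine ModuleCat.hom_ext (LinearMap.ext fun v => funext fun i => ?_)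
    change (Fin n → (M : Type u)) at v
    have h1 : (Pi.single (0 : Fin n) (v i) : Fin n → M)
        = (E (0 : Fin n) i : Matrix (Fin n) (Fin n) A) • v := by
      funext j
      rw [E, std_smul_apply]
      by_cases hj : j = 0
      · subst hj; rw [if_pos rfl, Pi.single_eq_same, one_smul]
      · rw [if_neg (fun hh => hj hh.symm), Pi.single_eq_of_ne hj]
    show f (Pi.single (0:Fin n) (v i)) 0 = f v i
    rw [h1]
    exact (congrFun (_root_.map_smul f.hom (E (0 : Fin n) i : Matrix (Fin n) (Fin n) A) v) 0).trans
      ((std_smul_apply (M := M') 0 i 0 1 (f.hom v)).trans (by rw [if_pos rfl, one_smul]))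
  preimage_map {M M'} f := by
    refine ModuleCat.hom_ext (LinearMap.ext fun m => ?_)
    show f ((Pi.single (0:Fin n) m : Fin n → M) (0:Fin n)) = f m
    rw [Pi.single_eq_same]

instance : (matG A n).Full := ((matGFF A n).full)
instance : (matG A n).Faithful := ((matGFF A n).faithful)

instance : (matG A n).EssSurj where
  mem_essImage N :=
    ⟨ModuleCat.of A (Fix0 A n N), ⟨(fixEquiv A n N).symm.toModuleIso⟩⟩

instance : (matG A n).IsEquivalence := {}

end functor
section extcomp
variable (A n)

noncomputable def mappedRes (M : ModuleCat.{u} A) (P : ProjectiveResolution M) :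
    ProjectiveResolution ((matG A n).obj M) where
  complex := ((matG A n).mapHomologicalComplex (ComplexShape.down ℕ)).obj P.complex
  projective k := ((matG A n).asEquivalence.map_projective_iff (P.complex.X k)).2 (P.projective k)
  π := ((matG A n).mapHomologicalComplex _).map P.π ≫
    (HomologicalComplex.singleMapHomologicalComplex (matG A n) (ComplexShape.down ℕ) 0).hom.app M
  quasiIso := inferInstance

noncomputable def cIso (M N : ModuleCat.{u} A) (P : ProjectiveResolution M) :
    P.complex.linearYonedaObj ℤ N ≅
      (mappedRes A n M P).complex.linearYonedaObj ℤ ((matG A n).obj N) :=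
  HomologicalComplex.Hom.isoOfComponents
    (fun i => (AddEquiv.toIntLinearEquiv
      (AddEquiv.mk' ((matGFF A n).homEquiv) (fun f g => (matG A n).map_add))).toModuleIso)
    (fun i j _ => by
      refine ModuleCat.hom_ext (LinearMap.ext fun (g : P.complex.X i ⟶ N) => ?_)
      show ((mappedRes A n M P).complex.linearYonedaObj ℤ ((matG A n).obj N)).d i j
          ((matG A n).map g)
        = (matG A n).map ((P.complex.linearYonedaObj ℤ N).d i j g)
      show (mappedRes A n M P).complex.d j i ≫ (matG A n).map g
        = (matG A n).map (P.complex.d j i ≫ g)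
      rw [Functor.map_comp]
      rfl)

lemma subsingleton_of_iso {X Y : ModuleCat.{u} ℤ} (e : X ≅ Y) :
    Subsingleton X ↔ Subsingleton Y :=
  (((forget (ModuleCat.{u} ℤ)).mapIso e).toEquiv).subsingleton_congr

noncomputable def extIsoMain (M N : ModuleCat.{u} A) (i : ℕ) :
    ((Ext ℤ (ModuleCat.{u} (Matrix (Fin n) (Fin n) A)) i).obj
        (Opposite.op ((matG A n).obj M))).obj ((matG A n).obj N)
      ≅ ((Ext ℤ (ModuleCat.{u} A) i).obj (Opposite.op M)).obj N := by
  have P : ProjectiveResolution M := (HasProjectiveResolution.out (Z := M)).some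
  exact (mappedRes A n M P).isoExt i ((matG A n).obj N) ≪≫
    (HomologicalComplex.homologyFunctor (ModuleCat.{u} ℤ) (ComplexShape.up ℕ) i).mapIso
      (cIso A n M N P).symm ≪≫
    (P.isoExt i N).symm

lemma subsingleton_ext_iff (M N : ModuleCat.{u} A) (i : ℕ) :
    Subsingleton (((Ext ℤ (ModuleCat.{u} (Matrix (Fin n) (Fin n) A)) i).obj
        (Opposite.op ((matG A n).obj M))).obj ((matG A n).obj N))
      ↔ Subsingleton (((Ext ℤ (ModuleCat.{u} A) i).obj (Opposite.op M)).obj N) :=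
  subsingleton_of_iso (extIsoMain A n M N i)

noncomputable def extIsoCongr {S : Type u} [Ring S] {M₁ M₂ N₁ N₂ : ModuleCat.{u} S}
    (eM : M₁ ≅ M₂) (eN : N₁ ≅ N₂) (i : ℕ) :
    ((Ext ℤ (ModuleCat.{u} S) i).obj (Opposite.op M₁)).obj N₁
      ≅ ((Ext ℤ (ModuleCat.{u} S) i).obj (Opposite.op M₂)).obj N₂ :=
  (((Ext ℤ (ModuleCat.{u} S) i).mapIso eM.symm.op).app N₁) ≪≫
    ((Ext ℤ (ModuleCat.{u} S) i).obj (Opposite.op M₂)).mapIso eN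

end extcomp

section finite
variable (A n)

lemma single_smul {M : Type u} [AddCommGroup M] [Module A M] (a : A) (m : M) :
    (Pi.single (0 : Fin n) (a • m) : Fin n → M)
      = (E00 a : Matrix (Fin n) (Fin n) A) • Pi.single (0 : Fin n) m := by
  funext j
  rw [E00, std_smul_apply, Pi.single_eq_same]
  by_cases hj : j = 0
  · subst hj; rw [if_pos rfl, Pi.single_eq_same]
  · rw [if_neg (fun hh => hj hh.symm), Pi.single_eq_of_ne hj]

lemma finite_pi (M : Type u) [AddCommGroup M] [Module A M] [Module.Finite A M] :
    Module.Finite (Matrix (Fin n) (Fin n) A) (Fin n → M) := by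
  obtain ⟨S, hSfin, hS⟩ := Submodule.fg_def.mp
    (Module.finite_def.mp (inferInstance : Module.Finite A M))
  rw [Module.finite_def, Submodule.fg_def]
  refine ⟨(fun m => Pi.single (0 : Fin n) m) '' S, Set.Finite.image _ hSfin, ?_⟩
  rw [Submodule.eq_top_iff']
  have key : ∀ m : M, (Pi.single (0 : Fin n) m : Fin n → M) ∈
      Submodule.span (Matrix (Fin n) (Fin n) A)
        ((fun m => Pi.single (0 : Fin n) m) '' S) := by
    intro m
    have hm : m ∈ Submodule.span A S := by rw [hS]; trivial
    induction hm using Submodule.span_induction with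
    | mem x hx => exact Submodule.subset_span ⟨x, hx, rfl⟩
    | zero =>
        have : (Pi.single (0 : Fin n) (0 : M) : Fin n → M) = 0 := by
          funext j; simp
        rw [this]; exact Submodule.zero_mem _
    | add x y _ _ hx hy =>
        have : (Pi.single (0 : Fin n) (x + y) : Fin n → M)
            = Pi.single (0 : Fin n) x + Pi.single (0 : Fin n) y := by
          funext j
          simp only [Pi.single_apply, Pi.add_apply]
          split <;> simp
        rw [this]; exact Submodule.add_mem _ hx hy
    | smul a x _ hx =>
        rw [single_smul A n]
        exact Submodule.smul_mem _ _ hx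
  intro v
  have hv : v = ∑ i, (E i (0 : Fin n) : Matrix (Fin n) (Fin n) A) •
      (Pi.single (0 : Fin n) (v i) : Fin n → M) := by
    funext j
    rw [Finset.sum_apply]
    have : ∀ i : Fin n, ((E i (0 : Fin n) : Matrix (Fin n) (Fin n) A) •
        (Pi.single (0 : Fin n) (v i) : Fin n → M)) j = if i = j then v i else 0 := by
      intro i
      rw [E, std_smul_apply, Pi.single_eq_same]
      by_cases h : i = j <;> simp [h]
    rw [Finset.sum_congr rfl (fun i _ => this i), Finset.sum_ite_eq' Finset.univ j (fun i => v i)]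
    simp
  rw [hv]
  exact Submodule.sum_mem _ fun i _ => Submodule.smul_mem _ _ (key (v i))

variable (N : Type u) [AddCommGroup N] [Module (Matrix (Fin n) (Fin n) A) N]

/-- `y ↦ E 0 j • y` as an element of `Fix0`. -/
def psi (j : Fin n) (y : N) : Fix0 A n N :=
  fixMk ((E (0 : Fin n) j : Matrix (Fin n) (Fin n) A) • y)
    (by rw [smul_smul]
        show ((E (0:Fin n) 0 : Matrix (Fin n) (Fin n) A) * E (0:Fin n) j) • y = _
        rw [E, E, Matrix.single_mul_single_same, one_mul])

variable {A n N}

lemma psi_add (j : Fin n) (y z : N) : psi A n N j (y + z) = psi A n N j y + psi A n N j z :=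
  fixVal_injective (by
    show (E (0:Fin n) j : Matrix (Fin n) (Fin n) A) • (y + z) = _ • y + _ • z
    rw [smul_add])

lemma psi_smul (j : Fin n) (r : Matrix (Fin n) (Fin n) A) (y : N) :
    psi A n N j (r • y) = ∑ k, r j k • psi A n N k y := by
  apply fixVal_injective
  show (E (0:Fin n) j : Matrix (Fin n) (Fin n) A) • (r • y) = _
  rw [fixVal_sum, smul_smul, E_mul_matrix]
  simp only [fixVal_smul]
  rw [Finset.sum_smul]
  refine Finset.sum_congr rfl fun k _ => ?_
  show Matrix.single (0:Fin n) k (r j k) • y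
    = (E00 (r j k) : Matrix (Fin n) (Fin n) A) • ((E (0:Fin n) k : Matrix (Fin n) (Fin n) A) • y)
  rw [smul_smul, E00, E, Matrix.single_mul_single_same, mul_one]

lemma psi_fix (x : Fix0 A n N) : psi A n N (0 : Fin n) (fixVal x) = x :=
  fixVal_injective (fixVal_spec x)

lemma finite_fix [Module.Finite (Matrix (Fin n) (Fin n) A) N] :
    Module.Finite A (Fix0 A n N) := by
  obtain ⟨S, hSfin, hS⟩ := Submodule.fg_def.mp
    (Module.finite_def.mp (inferInstance : Module.Finite (Matrix (Fin n) (Fin n) A) N))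
  rw [Module.finite_def, Submodule.fg_def]
  refine ⟨Set.image2 (fun j s => psi A n N j s) (Set.univ : Set (Fin n)) S,
    Set.Finite.image2 _ Set.finite_univ hSfin, ?_⟩
  rw [Submodule.eq_top_iff']
  have key : ∀ y ∈ Submodule.span (Matrix (Fin n) (Fin n) A) S, ∀ j : Fin n,
      psi A n N j y ∈ Submodule.span A
        (Set.image2 (fun j s => psi A n N j s) Set.univ S) := by
    intro y hy
    induction hy using Submodule.span_induction with
    | mem x hx => exact fun j => Submodule.subset_span ⟨j, trivial, x, hx, rfl⟩
    | zero =>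
        intro j
        have : psi A n N j (0 : N) = 0 := fixVal_injective (by
          show (E (0:Fin n) j : Matrix (Fin n) (Fin n) A) • (0:N) = (0:N); simp)
        rw [this]; exact Submodule.zero_mem _
    | add x y _ _ hx hy =>
        intro j
        rw [psi_add]; exact Submodule.add_mem _ (hx j) (hy j)
    | smul r x _ hx =>
        intro j
        rw [psi_smul]
        exact Submodule.sum_mem _ fun k _ => Submodule.smul_mem _ _ (hx k)
  intro x
  rw [← psi_fix x]
  exact key (fixVal x) (by rw [hS]; trivial) 0

end finite
end Morita2


open Morita Morita2

/-- If a left-noetherian ring `A` satisfies (AC), then so does every matrix ring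
over `A`. -/
theorem stmt8 (A : Type u) [Ring A] [IsNoetherianRing A] (hA : SatisfiesAC A)
    (n : ℕ) (hn : 0 < n) : SatisfiesAC (Matrix (Fin n) (Fin n) A) := by
  haveI : NeZero n := ⟨hn.ne'⟩
  intro M' hM'
  haveI : Module.Finite (Matrix (Fin n) (Fin n) A) (M' : Type u) := hM'
  haveI hMfin : Module.Finite A (Fix0 A n (M' : Type u)) := finite_fix
  set M : ModuleCat.{u} A := ModuleCat.of A (Fix0 A n (M' : Type u)) with hM
  obtain ⟨b, hb⟩ := hA M hMfin
  refine ⟨b, ?_⟩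
  rintro N' hN' ⟨k, hk⟩ i hi
  haveI : Module.Finite (Matrix (Fin n) (Fin n) A) (N' : Type u) := hN'
  haveI hNfin : Module.Finite A (Fix0 A n (N' : Type u)) := finite_fix
  set N : ModuleCat.{u} A := ModuleCat.of A (Fix0 A n (N' : Type u)) with hN
  have isoM : (matG A n).obj M ≅ M' := (fixEquiv A n (M' : Type u)).symm.toModuleIso
  have isoN : (matG A n).obj N ≅ N' := (fixEquiv A n (N' : Type u)).symm.toModuleIso
  have trans : ∀ j : ℕ, Subsingleton (ExtGroup M' N' j) ↔ Subsingleton (ExtGroup M N j) := by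
    intro j
    exact (subsingleton_of_iso (extIsoCongr isoM.symm isoN.symm j)).trans
      (subsingleton_ext_iff A n M N j)
  exact (trans i).mpr (hb N hNfin ⟨k, fun j hj => (trans j).mp (hk j hj)⟩ i hi)
end
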